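/- Let G be a weighted graph on a finite vertex set V, let P be a partition of V into nonempty parts, and let Q be a partition refining P in which each part of P is divided into at most k parts. If irreg_G(Q) = I, then irreg_G(P) ≥ I/(2k²). -/

import Mathlib

open Finset

/-- The sum of weights over ordered pairs in `A × B` in a weighted graph `w`. -/
def weightSum {V : Type*} (w : V → V → ℝ) (A B : Finset V) : ℝ :=
  ∑ x ∈ A, ∑ y ∈ B, w x y

/-- The weighted edge density between `X` and `Y`. -/
noncomputable def wDensity {V : Type*} (w : V → V → ℝ) (X Y : Finset V) : ℝ :=
  weightSum w X Y / ((X.card : ℝ) * (Y.card : ℝ))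

/-- The irregularity of the pair `X, Y` in a weighted graph `w`. -/
noncomputable def wIrregPair {V : Type*} [DecidableEq V] (w : V → V → ℝ)
    (X Y : Finset V) : ℝ :=
  (X.powerset ×ˢ Y.powerset).sup'
    ⟨(∅, ∅), by simp⟩
    (fun UW => |weightSum w UW.1 UW.2 - (UW.1.card : ℝ) * (UW.2.card : ℝ) * wDensity w X Y|)

/-- The irregularity of a vertex partition in a weighted graph `w`. -/
noncomputable def wIrregPartition {V : Type*} [DecidableEq V] (w : V → V → ℝ)
    (P : Finset (Finset V)) : ℝ :=
  ∑ X ∈ P, ∑ Y ∈ P, wIrregPair w X Y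

/-- `P` is a partition of the vertex set into nonempty parts. -/
def IsPartition {V : Type*} [Fintype V] [DecidableEq V] (P : Finset (Finset V)) : Prop :=
  (∀ p ∈ P, p.Nonempty) ∧ (∀ p ∈ P, ∀ q ∈ P, p ≠ q → Disjoint p q) ∧
    P.biUnion id = Finset.univ

lemma val_le_wIrregPair {V : Type*} [DecidableEq V] (w : V → V → ℝ)
    {X Y U W : Finset V} (hU : U ⊆ X) (hW : W ⊆ Y) :
    |weightSum w U W - (U.card : ℝ) * (W.card : ℝ) * wDensity w X Y| ≤ wIrregPair w X Y := by
  have hmem : (U, W) ∈ X.powerset ×ˢ Y.powerset := by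
    simp [Finset.mem_product, hU, hW]
  exact Finset.le_sup'
    (fun UW : Finset V × Finset V =>
      |weightSum w UW.1 UW.2 - (UW.1.card : ℝ) * (UW.2.card : ℝ) * wDensity w X Y|) hmem

lemma wIrregPair_nonneg {V : Type*} [DecidableEq V] (w : V → V → ℝ)
    (X Y : Finset V) : 0 ≤ wIrregPair w X Y := by
  have := val_le_wIrregPair w (X := X) (Y := Y) (U := ∅) (W := ∅)
    (Finset.empty_subset _) (Finset.empty_subset _)
  simpa [weightSum] using this

lemma wIrregPair_le_two_mul {V : Type*} [DecidableEq V] (w : V → V → ℝ)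
    {X Y p p' : Finset V} (hX : X.Nonempty) (hY : Y.Nonempty)
    (hXp : X ⊆ p) (hYp : Y ⊆ p') :
    wIrregPair w X Y ≤ 2 * wIrregPair w p p' := by
  apply Finset.sup'_le
  rintro ⟨U, W⟩ hUW
  simp only [Finset.mem_product, Finset.mem_powerset] at hUW
  obtain ⟨hU, hW⟩ := hUW
  have hxne : (X.card : ℝ) ≠ 0 := Nat.cast_ne_zero.2 hX.card_ne_zero
  have hyne : (Y.card : ℝ) ≠ 0 := Nat.cast_ne_zero.2 hY.card_ne_zero
  have hweq : weightSum w X Y = (X.card : ℝ) * (Y.card : ℝ) * wDensity w X Y := by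
    rw [wDensity]
    field_simp
  have h1 : |weightSum w U W - (U.card : ℝ) * (W.card : ℝ) * wDensity w p p'|
      ≤ wIrregPair w p p' := val_le_wIrregPair w (hU.trans hXp) (hW.trans hYp)
  have h2 : |weightSum w X Y - (X.card : ℝ) * (Y.card : ℝ) * wDensity w p p'|
      ≤ wIrregPair w p p' := val_le_wIrregPair w hXp hYp
  have hcard : (U.card : ℝ) * (W.card : ℝ) ≤ (X.card : ℝ) * (Y.card : ℝ) := by
    have h3 := Finset.card_le_card hU
    have h4 := Finset.card_le_card hW
    have h3' : (U.card : ℝ) ≤ X.card := by exact_mod_cast h3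
    have h4' : (W.card : ℝ) ≤ Y.card := by exact_mod_cast h4
    exact mul_le_mul h3' h4' (by positivity) (by positivity)
  have hu0 : (0:ℝ) ≤ (U.card : ℝ) * (W.card : ℝ) := by positivity
  have hxy0 : (0:ℝ) ≤ (X.card : ℝ) * (Y.card : ℝ) := by positivity
  have step1 : |weightSum w U W - (U.card : ℝ) * (W.card : ℝ) * wDensity w X Y|
      ≤ |weightSum w U W - (U.card : ℝ) * (W.card : ℝ) * wDensity w p p'|
        + (U.card : ℝ) * (W.card : ℝ) * |wDensity w p p' - wDensity w X Y| := by
    calc |weightSum w U W - (U.card : ℝ) * (W.card : ℝ) * wDensity w X Y|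
        = |(weightSum w U W - (U.card : ℝ) * (W.card : ℝ) * wDensity w p p')
            + (U.card : ℝ) * (W.card : ℝ) * (wDensity w p p' - wDensity w X Y)| := by
          ring_nf
      _ ≤ |weightSum w U W - (U.card : ℝ) * (W.card : ℝ) * wDensity w p p'|
            + |(U.card : ℝ) * (W.card : ℝ) * (wDensity w p p' - wDensity w X Y)| :=
          abs_add_le _ _
      _ = |weightSum w U W - (U.card : ℝ) * (W.card : ℝ) * wDensity w p p'|
            + (U.card : ℝ) * (W.card : ℝ) * |wDensity w p p' - wDensity w X Y| := by
          rw [abs_mul, abs_of_nonneg hu0]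
  have step2 : (U.card : ℝ) * (W.card : ℝ) * |wDensity w p p' - wDensity w X Y|
      ≤ (X.card : ℝ) * (Y.card : ℝ) * |wDensity w p p' - wDensity w X Y| :=
    mul_le_mul_of_nonneg_right hcard (abs_nonneg _)
  have step3 : (X.card : ℝ) * (Y.card : ℝ) * |wDensity w p p' - wDensity w X Y|
      = |weightSum w X Y - (X.card : ℝ) * (Y.card : ℝ) * wDensity w p p'| := by
    have h : |weightSum w X Y - (X.card : ℝ) * (Y.card : ℝ) * wDensity w p p'|
        = (X.card : ℝ) * (Y.card : ℝ) * |wDensity w X Y - wDensity w p p'| := by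
      rw [hweq, ← mul_sub, abs_mul, abs_of_nonneg hxy0]
    rw [h, abs_sub_comm]
  dsimp only
  linarith [h1, h2, step1, step2, step3.le, step3.ge]

set_option maxHeartbeats 1000000 in
/-- If `Q` refines a partition `P` with each part of `P` divided into at most `k` parts,
and `Q` has irregularity `I`, then `P` has irregularity at least `I/(2k²)`. -/
theorem irreg_of_refinement {V : Type*} [Fintype V] [DecidableEq V]
    (w : V → V → ℝ) (hsymm : ∀ x y, w x y = w y x) (h0 : ∀ x y, 0 ≤ w x y)
    (h1 : ∀ x y, w x y ≤ 1)
    (P Q : Finset (Finset V)) (hP : IsPartition P) (hQ : IsPartition Q)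
    (hrefines : ∀ q ∈ Q, ∃ p ∈ P, q ⊆ p)
    (k : ℕ) (hk : ∀ p ∈ P, (Q.filter (fun q => q ⊆ p)).card ≤ k)
    (I : ℝ) (hI : wIrregPartition w Q = I) :
    I / (2 * (k : ℝ) ^ 2) ≤ wIrregPartition w P := by
  obtain ⟨hPne, hPdis, _⟩ := hP
  obtain ⟨hQne, _, _⟩ := hQ
  have hPnonneg : 0 ≤ wIrregPartition w P :=
    Finset.sum_nonneg fun X _ => Finset.sum_nonneg fun Y _ => wIrregPair_nonneg w X Y
  rcases Nat.eq_zero_or_pos k with hk0 | hkpos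
  · subst hk0
    simpa using hPnonneg
  -- uniqueness of containing part
  have huniq : ∀ q ∈ Q, ∀ p ∈ P, ∀ p'' ∈ P, q ⊆ p → q ⊆ p'' → p = p'' := by
    intro q hq p hp p'' hp'' hqp hqp''
    by_contra hne
    obtain ⟨x, hx⟩ := hQne q hq
    exact (Finset.disjoint_left.1 (hPdis p hp p'' hp'' hne)) (hqp hx) (hqp'' hx)
  have hQeq : Q = P.biUnion (fun p => Q.filter (fun q => q ⊆ p)) := by
    ext q
    simp only [Finset.mem_biUnion, Finset.mem_filter]
    constructor
    · intro hq
      obtain ⟨p, hp, hqp⟩ := hrefines q hq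
      exact ⟨p, hp, hq, hqp⟩
    · rintro ⟨p, _, hq, _⟩
      exact hq
  have hdisj : (P : Set (Finset V)).PairwiseDisjoint
      (fun p => Q.filter (fun q => q ⊆ p)) := by
    intro p hp p'' hp'' hne
    refine Finset.disjoint_left.2 ?_
    intro q hq hq'
    rw [Finset.mem_filter] at hq hq'
    exact hne (huniq q hq.1 p hp p'' hp'' hq.2 hq'.2)
  have hmain : wIrregPartition w Q ≤ 2 * (k : ℝ) ^ 2 * wIrregPartition w P := by
    rw [wIrregPartition, hQeq, Finset.sum_biUnion hdisj]
    have hrw : ∀ X, ∑ Y ∈ (P.biUnion fun p => Q.filter (fun q => q ⊆ p)), wIrregPair w X Y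
        = ∑ p' ∈ P, ∑ Y ∈ Q.filter (fun q => q ⊆ p'), wIrregPair w X Y := fun X =>
      Finset.sum_biUnion hdisj
    calc ∑ p ∈ P, ∑ X ∈ Q.filter (fun q => q ⊆ p),
          ∑ Y ∈ (P.biUnion fun p => Q.filter (fun q => q ⊆ p)), wIrregPair w X Y
        = ∑ p ∈ P, ∑ p' ∈ P, ∑ X ∈ Q.filter (fun q => q ⊆ p),
            ∑ Y ∈ Q.filter (fun q => q ⊆ p'), wIrregPair w X Y := by
          refine Finset.sum_congr rfl fun p _ => ?_
          calc ∑ X ∈ Q.filter (fun q => q ⊆ p),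
                ∑ Y ∈ (P.biUnion fun p => Q.filter (fun q => q ⊆ p)), wIrregPair w X Y
              = ∑ X ∈ Q.filter (fun q => q ⊆ p), ∑ p' ∈ P,
                  ∑ Y ∈ Q.filter (fun q => q ⊆ p'), wIrregPair w X Y :=
                Finset.sum_congr rfl fun X _ => hrw X
            _ = ∑ p' ∈ P, ∑ X ∈ Q.filter (fun q => q ⊆ p),
                  ∑ Y ∈ Q.filter (fun q => q ⊆ p'), wIrregPair w X Y := Finset.sum_comm
      _ ≤ ∑ p ∈ P, ∑ p' ∈ P, 2 * (k : ℝ) ^ 2 * wIrregPair w p p' := by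
          refine Finset.sum_le_sum fun p hp => Finset.sum_le_sum fun p' hp' => ?_
          have hbound : ∀ X ∈ Q.filter (fun q => q ⊆ p),
              ∑ Y ∈ Q.filter (fun q => q ⊆ p'), wIrregPair w X Y
                ≤ (k : ℝ) * (2 * wIrregPair w p p') := by
            intro X hX
            rw [Finset.mem_filter] at hX
            have h : ∀ Y ∈ Q.filter (fun q => q ⊆ p'),
                wIrregPair w X Y ≤ 2 * wIrregPair w p p' := by
              intro Y hY
              rw [Finset.mem_filter] at hY
              exact wIrregPair_le_two_mul w (hQne X hX.1) (hQne Y hY.1) hX.2 hY.2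
            calc ∑ Y ∈ Q.filter (fun q => q ⊆ p'), wIrregPair w X Y
                ≤ ∑ _Y ∈ Q.filter (fun q => q ⊆ p'), 2 * wIrregPair w p p' :=
                  Finset.sum_le_sum h
              _ = ((Q.filter (fun q => q ⊆ p')).card : ℝ) * (2 * wIrregPair w p p') := by
                  rw [Finset.sum_const, nsmul_eq_mul]
              _ ≤ (k : ℝ) * (2 * wIrregPair w p p') := by
                  refine mul_le_mul_of_nonneg_right ?_
                    (by have := wIrregPair_nonneg w p p'; linarith)
                  exact_mod_cast hk p' hp'
          calc ∑ X ∈ Q.filter (fun q => q ⊆ p),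
                ∑ Y ∈ Q.filter (fun q => q ⊆ p'), wIrregPair w X Y
              ≤ ∑ _X ∈ Q.filter (fun q => q ⊆ p), (k : ℝ) * (2 * wIrregPair w p p') :=
                Finset.sum_le_sum hbound
            _ = ((Q.filter (fun q => q ⊆ p)).card : ℝ) * ((k : ℝ) * (2 * wIrregPair w p p')) := by
                rw [Finset.sum_const, nsmul_eq_mul]
            _ ≤ (k : ℝ) * ((k : ℝ) * (2 * wIrregPair w p p')) := by
                refine mul_le_mul_of_nonneg_right ?_
                  (by have := wIrregPair_nonneg w p p'; positivity)
                exact_mod_cast hk p hp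
            _ = 2 * (k : ℝ) ^ 2 * wIrregPair w p p' := by ring
      _ = 2 * (k : ℝ) ^ 2 * wIrregPartition w P := by
          rw [wIrregPartition, Finset.mul_sum]
          exact Finset.sum_congr rfl fun p _ => by rw [Finset.mul_sum]
  have hkR : (0:ℝ) < (k : ℝ) := by exact_mod_cast hkpos
  rw [div_le_iff₀ (by positivity)]
  calc I = wIrregPartition w Q := hI.symm
    _ ≤ 2 * (k : ℝ) ^ 2 * wIrregPartition w P := hmain
    _ = wIrregPartition w P * (2 * (k : ℝ) ^ 2) := by ring
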